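/- In the group G_n, for even j, conjugation by g_j^k sends g₁^{k₁} ⋯ g_{2n+1}^{k_{2n+1}} to g₁^{k₁(-1)^k + k_{j+1}k'(-1)^{k₂+k₄+⋯+k_j+k}} g₂^{k₂} ⋯ g_{2n+1}^{k_{2n+1}}, where k' = k mod 2. -/

import Mathlib

/-- The defining relators of the group `Gₙ`: generators are indexed by `{1, …, 2n+1}`;
for even `j`, `g_j g₁ g_j⁻¹ = g₁⁻¹` and `g_{j+1} g_j g_{j+1}⁻¹ = g₁ g_j`;
all other pairs of generators commute. -/
def relsG (n : ℕ) : Set (FreeGroup {i : ℕ // 1 ≤ i ∧ i ≤ 2*n+1}) :=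
  { w | (∃ j : {i : ℕ // 1 ≤ i ∧ i ≤ 2*n+1}, j.1 % 2 = 0 ∧
          w = FreeGroup.of j * FreeGroup.of ⟨1, by omega⟩ * (FreeGroup.of j)⁻¹ *
              FreeGroup.of ⟨1, by omega⟩) ∨
        (∃ j j1 : {i : ℕ // 1 ≤ i ∧ i ≤ 2*n+1}, j.1 % 2 = 0 ∧ j1.1 = j.1 + 1 ∧
          w = FreeGroup.of j1 * FreeGroup.of j * (FreeGroup.of j1)⁻¹ *
              (FreeGroup.of ⟨1, by omega⟩ * FreeGroup.of j)⁻¹) ∨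
        (∃ a b : {i : ℕ // 1 ≤ i ∧ i ≤ 2*n+1},
          ¬ ((a.1 = 1 ∧ b.1 % 2 = 0) ∨ (b.1 = 1 ∧ a.1 % 2 = 0) ∨
             (b.1 % 2 = 0 ∧ a.1 = b.1 + 1) ∨ (a.1 % 2 = 0 ∧ b.1 = a.1 + 1)) ∧
          w = FreeGroup.of a * FreeGroup.of b * (FreeGroup.of a)⁻¹ * (FreeGroup.of b)⁻¹) }

/-- The polycyclic group `Gₙ` of Hirsch length `2n+1`. -/
abbrev Gn (n : ℕ) := PresentedGroup (relsG n)

/-- The generator `g_i` of `Gₙ` (1-based index, `1 ≤ i ≤ 2n+1`). -/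
def gg (n : ℕ) (i : ℕ) : Gn n :=
  if h : 1 ≤ i ∧ i ≤ 2*n+1 then PresentedGroup.of ⟨i, h⟩ else 1

/-- `(-1)^m` for an integer `m`: `1` if `m` is even, `-1` if `m` is odd. -/
def eps (m : ℤ) : ℤ := if m % 2 = 0 then 1 else -1

namespace Aux

lemma rel_eq_one {n : ℕ} {r : FreeGroup {i : ℕ // 1 ≤ i ∧ i ≤ 2*n+1}} (h : r ∈ relsG n) :
    (QuotientGroup.mk r : Gn n) = 1 := by
  rw [QuotientGroup.eq_one_iff]
  exact Subgroup.subset_normalClosure h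

lemma mk_of {n : ℕ} (i : ℕ) (h : 1 ≤ i ∧ i ≤ 2*n+1) :
    (QuotientGroup.mk (FreeGroup.of ⟨i, h⟩) : Gn n) = gg n i := by
  rw [gg, dif_pos h]; rfl

lemma grel1 {n : ℕ} (j : ℕ) (hje : j % 2 = 0) (h1 : 1 ≤ j) (h2 : j ≤ 2*n+1) :
    gg n j * gg n 1 * (gg n j)⁻¹ = (gg n 1)⁻¹ := by
  have h := rel_eq_one (n := n) (Or.inl ⟨⟨j, ⟨h1, h2⟩⟩, hje, rfl⟩)
  rw [QuotientGroup.mk_mul, QuotientGroup.mk_mul, QuotientGroup.mk_mul,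
    QuotientGroup.mk_inv, mk_of j ⟨h1, h2⟩, mk_of 1 (by omega)] at h
  exact eq_inv_of_mul_eq_one_left h

lemma grel2 {n : ℕ} (j : ℕ) (hje : j % 2 = 0) (h1 : 1 ≤ j) (h2 : j + 1 ≤ 2*n+1) :
    gg n (j+1) * gg n j * (gg n (j+1))⁻¹ = gg n 1 * gg n j := by
  have h := rel_eq_one (n := n)
    (Or.inr (Or.inl ⟨⟨j, ⟨h1, by omega⟩⟩, ⟨j+1, ⟨by omega, h2⟩⟩, hje, rfl, rfl⟩))
  rw [QuotientGroup.mk_mul, QuotientGroup.mk_mul, QuotientGroup.mk_mul,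
    QuotientGroup.mk_inv, QuotientGroup.mk_inv, QuotientGroup.mk_mul,
    mk_of j (⟨h1, by omega⟩), mk_of (j+1) ⟨by omega, h2⟩, mk_of 1 (by omega)] at h
  rwa [mul_inv_eq_one] at h

lemma gcomm {n : ℕ} (a b : ℕ) (ha1 : 1 ≤ a) (ha2 : a ≤ 2*n+1) (hb1 : 1 ≤ b) (hb2 : b ≤ 2*n+1)
    (h : ¬ ((a = 1 ∧ b % 2 = 0) ∨ (b = 1 ∧ a % 2 = 0) ∨
            (b % 2 = 0 ∧ a = b + 1) ∨ (a % 2 = 0 ∧ b = a + 1))) :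
    Commute (gg n a) (gg n b) := by
  have hrel := rel_eq_one (n := n)
    (Or.inr (Or.inr ⟨⟨a, ⟨ha1, ha2⟩⟩, ⟨b, ⟨hb1, hb2⟩⟩, h, rfl⟩))
  rw [QuotientGroup.mk_mul, QuotientGroup.mk_mul, QuotientGroup.mk_mul,
    QuotientGroup.mk_inv, QuotientGroup.mk_inv,
    mk_of a ⟨ha1, ha2⟩, mk_of b ⟨hb1, hb2⟩] at hrel
  exact commutatorElement_eq_one_iff_commute.mp hrel



lemma eps_add (x y : ℤ) : eps (x + y) = eps x * eps y := by
  unfold eps; split_ifs <;> [skip; omega; omega; skip; omega; skip; skip; omega] <;> norm_num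

lemma eps_succ (x : ℤ) : eps (x + 1) = -eps x := by
  unfold eps; split_ifs <;> first | omega | norm_num

lemma eps_zero : eps 0 = 1 := rfl

/-- conjugation of `g₁^m` by `g_j` for even `j` -/
lemma conj1 {n : ℕ} (j : ℕ) (hje : j % 2 = 0) (h1 : 1 ≤ j) (h2 : j ≤ 2*n+1) (m : ℤ) :
    gg n j * gg n 1 ^ m * (gg n j)⁻¹ = gg n 1 ^ (-m) := by
  rw [← conj_zpow, grel1 j hje h1 h2, inv_zpow, ← zpow_neg]

/-- conjugation of `g₁^m` by `g_j^k` for even `j` -/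
lemma conj_pow_a {n : ℕ} (j : ℕ) (hje : j % 2 = 0) (h1 : 1 ≤ j) (h2 : j ≤ 2*n+1) (k : ℤ) :
    ∀ m : ℤ, gg n j ^ k * gg n 1 ^ m * (gg n j ^ k)⁻¹ = gg n 1 ^ (m * eps k) := by
  induction k using Int.induction_on with
  | zero => intro m; simp [eps_zero]
  | succ k ih =>
    intro m
    have e1 : gg n j ^ ((k : ℤ)+1) * gg n 1 ^ m * (gg n j ^ ((k:ℤ)+1))⁻¹
        = gg n j ^ (k:ℤ) * (gg n j * gg n 1 ^ m * (gg n j)⁻¹) * (gg n j ^ (k:ℤ))⁻¹ := by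
      group
    rw [e1, conj1 j hje h1 h2, ih, eps_succ]
    ring_nf
  | pred k ih =>
    intro m
    have e1 : gg n j ^ (-(k : ℤ)-1) * gg n 1 ^ m * (gg n j ^ (-(k:ℤ)-1))⁻¹
        = gg n j ^ (-(k:ℤ)) * ((gg n j)⁻¹ * gg n 1 ^ m * gg n j) * (gg n j ^ (-(k:ℤ)))⁻¹ := by
      group
    have e2 : (gg n j)⁻¹ * gg n 1 ^ m * gg n j = gg n 1 ^ (-m) := by
      have h := conj1 j hje h1 h2 (-m)
      rw [neg_neg] at h
      rw [← h]; group
    rw [e1, e2, ih]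
    have : eps (-(k:ℤ) - 1) = -eps (-(k:ℤ)) := by
      have h := eps_succ (-(k:ℤ) - 1)
      rw [show -(k:ℤ) - 1 + 1 = -(k:ℤ) by ring] at h
      linarith
    rw [this]; ring_nf


lemma conj1' {n : ℕ} (j : ℕ) (hje : j % 2 = 0) (h1 : 1 ≤ j) (h2 : j ≤ 2*n+1) (m : ℤ) :
    (gg n j)⁻¹ * gg n 1 ^ m * gg n j = gg n 1 ^ (-m) := by
  have h := conj1 j hje h1 h2 (-m)
  rw [neg_neg] at h
  rw [← h]; group

/-- one-step: `g_j g_{j+1} g_j⁻¹ = g₁⁻¹ g_{j+1}` -/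
lemma conj2 {n : ℕ} (j : ℕ) (hje : j % 2 = 0) (h1 : 1 ≤ j) (h2 : j + 1 ≤ 2*n+1) :
    gg n j * gg n (j+1) * (gg n j)⁻¹ = (gg n 1)⁻¹ * gg n (j+1) := by
  have key : gg n (j+1) * gg n j = gg n 1 * gg n j * gg n (j+1) := by
    rw [← grel2 j hje h1 h2]; group
  calc gg n j * gg n (j+1) * (gg n j)⁻¹
      = (gg n 1)⁻¹ * (gg n 1 * gg n j * gg n (j+1)) * (gg n j)⁻¹ := by group
    _ = (gg n 1)⁻¹ * (gg n (j+1) * gg n j) * (gg n j)⁻¹ := by rw [key]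
    _ = (gg n 1)⁻¹ * gg n (j+1) := by group

lemma conj2' {n : ℕ} (j : ℕ) (hje : j % 2 = 0) (h1 : 1 ≤ j) (h2 : j + 1 ≤ 2*n+1) :
    (gg n j)⁻¹ * gg n (j+1) * gg n j = (gg n 1)⁻¹ * gg n (j+1) := by
  have key : gg n (j+1) * gg n j = gg n 1 * gg n j * gg n (j+1) := by
    rw [← grel2 j hje h1 h2]; group
  have hinv : (gg n j)⁻¹ * gg n 1 * gg n j = (gg n 1)⁻¹ := by
    have := conj1' j hje h1 (show j ≤ 2*n+1 by omega) 1
    simpa using this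
  calc (gg n j)⁻¹ * gg n (j+1) * gg n j
      = (gg n j)⁻¹ * (gg n (j+1) * gg n j) := by group
    _ = (gg n j)⁻¹ * (gg n 1 * gg n j * gg n (j+1)) := by rw [key]
    _ = ((gg n j)⁻¹ * gg n 1 * gg n j) * gg n (j+1) := by group
    _ = (gg n 1)⁻¹ * gg n (j+1) := by rw [hinv]

/-- conjugation of `g_{j+1}` by `g_j^k` -/
lemma conj_pow_b {n : ℕ} (j : ℕ) (hje : j % 2 = 0) (h1 : 1 ≤ j) (h2 : j + 1 ≤ 2*n+1) :
    ∀ k : ℤ, gg n j ^ k * gg n (j+1) * (gg n j ^ k)⁻¹ = gg n 1 ^ (-(k % 2)) * gg n (j+1) := by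
  intro k
  induction k using Int.induction_on with
  | zero => simp
  | succ k ih =>
    have e1 : gg n j ^ ((k:ℤ)+1) * gg n (j+1) * (gg n j ^ ((k:ℤ)+1))⁻¹
        = gg n j * (gg n j ^ (k:ℤ) * gg n (j+1) * (gg n j ^ (k:ℤ))⁻¹) * (gg n j)⁻¹ := by group
    rw [e1, ih, show gg n j * (gg n 1 ^ (-((k:ℤ) % 2)) * gg n (j+1)) * (gg n j)⁻¹
        = (gg n j * gg n 1 ^ (-((k:ℤ) % 2)) * (gg n j)⁻¹) * (gg n j * gg n (j+1) * (gg n j)⁻¹)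
        from by group, conj1 j hje h1 (show j ≤ 2*n+1 by omega), conj2 j hje h1 h2,
      show (gg n 1)⁻¹ = gg n 1 ^ (-1 : ℤ) from by group,
      show gg n 1 ^ (-(-((k:ℤ)%2))) * (gg n 1 ^ (-1:ℤ) * gg n (j+1))
        = gg n 1 ^ ((k:ℤ)%2 - 1) * gg n (j+1) from by group]
    congr 2
    omega
  | pred k ih =>
    have e1 : gg n j ^ (-(k:ℤ)-1) * gg n (j+1) * (gg n j ^ (-(k:ℤ)-1))⁻¹
        = (gg n j)⁻¹ * (gg n j ^ (-(k:ℤ)) * gg n (j+1) * (gg n j ^ (-(k:ℤ)))⁻¹) * gg n j := by group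
    rw [e1, ih, show (gg n j)⁻¹ * (gg n 1 ^ (-((-k:ℤ) % 2)) * gg n (j+1)) * gg n j
        = ((gg n j)⁻¹ * gg n 1 ^ (-((-k:ℤ) % 2)) * gg n j) * ((gg n j)⁻¹ * gg n (j+1) * gg n j)
        from by group, conj1' j hje h1 (show j ≤ 2*n+1 by omega), conj2' j hje h1 h2,
      show (gg n 1)⁻¹ = gg n 1 ^ (-1 : ℤ) from by group,
      show gg n 1 ^ (-(-((-k:ℤ)%2))) * (gg n 1 ^ (-1:ℤ) * gg n (j+1))
        = gg n 1 ^ ((-k:ℤ)%2 - 1) * gg n (j+1) from by group]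
    congr 2
    omega

/-- conjugation of `g_{j+1}^m` by `g_j^k` -/
lemma conj_pow_b' {n : ℕ} (j : ℕ) (hje : j % 2 = 0) (h1 : 2 ≤ j) (h2 : j + 1 ≤ 2*n+1)
    (k m : ℤ) :
    gg n j ^ k * gg n (j+1) ^ m * (gg n j ^ k)⁻¹ = gg n 1 ^ (-(k % 2) * m) * gg n (j+1) ^ m := by
  have hcomm : Commute (gg n 1) (gg n (j+1)) :=
    gcomm 1 (j+1) le_rfl (by omega) (by omega) h2 (by omega)
  calc gg n j ^ k * gg n (j+1) ^ m * (gg n j ^ k)⁻¹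
      = (gg n j ^ k * gg n (j+1) * (gg n j ^ k)⁻¹) ^ m := by rw [conj_zpow]
    _ = (gg n 1 ^ (-(k % 2)) * gg n (j+1)) ^ m := by rw [conj_pow_b j hje (by omega) h2]
    _ = (gg n 1 ^ (-(k % 2))) ^ m * gg n (j+1) ^ m := (hcomm.zpow_left _).mul_zpow m
    _ = gg n 1 ^ (-(k % 2) * m) * gg n (j+1) ^ m := by rw [← zpow_mul]

lemma even_move {n : ℕ} (i : ℕ) (hie : i % 2 = 0) (h1 : 1 ≤ i) (h2 : i ≤ 2*n+1) (m s : ℤ) :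
    gg n i ^ m * gg n 1 ^ s = gg n 1 ^ (s * eps m) * gg n i ^ m := by
  have h := conj_pow_a i hie h1 h2 m s
  calc gg n i ^ m * gg n 1 ^ s
      = (gg n i ^ m * gg n 1 ^ s * (gg n i ^ m)⁻¹) * gg n i ^ m := by group
    _ = gg n 1 ^ (s * eps m) * gg n i ^ m := by rw [h]

lemma prod_succ_g {G : Type*} [Monoid G] (f : ℕ → G) (m : ℕ) :
    ((List.range (m+1)).map f).prod = ((List.range m).map f).prod * f m := by
  rw [List.range_succ]; simp

lemma moveB {n : ℕ} (ks : ℕ → ℤ) :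
    ∀ t : ℕ, 2*t+2 ≤ 2*n+1 → ∀ s : ℤ,
    ((List.range (2*t+1)).map (fun i => gg n (i+2) ^ ks (i+2))).prod * gg n 1 ^ s
      = gg n 1 ^ (s * eps (∑ i ∈ Finset.range (t+1), ks (2*i+2))) *
        ((List.range (2*t+1)).map (fun i => gg n (i+2) ^ ks (i+2))).prod := by
  intro t
  induction t with
  | zero =>
      intro ht s
      have hpr : ((List.range 1).map (fun i => gg n (i+2) ^ ks (i+2))).prod = gg n 2 ^ ks 2 := by
        simp [List.range_succ]
      rw [hpr, Finset.sum_range_one, show 2*0+2 = 2 from rfl]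
      exact even_move 2 rfl (by omega) (by omega) (ks 2) s
  | succ t ih =>
      intro ht s
      have hb : 2*t+2 ≤ 2*n+1 := by omega
      have e : 2*(t+1)+1 = (2*t+1)+1+1 := by ring
      rw [e, prod_succ_g, prod_succ_g]
      set B := ((List.range (2*t+1)).map (fun i => gg n (i+2) ^ ks (i+2))).prod with hB
      have heven : gg n (2*t+1+1+2) ^ ks (2*t+1+1+2) * gg n 1 ^ s
          = gg n 1 ^ (s * eps (ks (2*t+1+1+2))) * gg n (2*t+1+1+2) ^ ks (2*t+1+1+2) :=
        even_move (2*t+1+1+2) (by omega) (by omega) (by omega) _ s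
      have hodd : ∀ x y : ℤ, gg n (2*t+1+2) ^ x * gg n 1 ^ y
          = gg n 1 ^ y * gg n (2*t+1+2) ^ x := by
        intro x y
        have hc : Commute (gg n (2*t+1+2)) (gg n 1) :=
          gcomm (2*t+1+2) 1 (by omega) (by omega) (by omega) (by omega) (by omega)
        exact ((hc.zpow_left x).zpow_right y).eq
      calc B * gg n (2*t+1+2) ^ ks (2*t+1+2) * gg n (2*t+1+1+2) ^ ks (2*t+1+1+2) * gg n 1 ^ s
          = B * gg n (2*t+1+2) ^ ks (2*t+1+2) *
              (gg n (2*t+1+1+2) ^ ks (2*t+1+1+2) * gg n 1 ^ s) := by group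
        _ = B * gg n (2*t+1+2) ^ ks (2*t+1+2) *
              (gg n 1 ^ (s * eps (ks (2*t+1+1+2))) * gg n (2*t+1+1+2) ^ ks (2*t+1+1+2)) := by
            rw [heven]
        _ = B * (gg n (2*t+1+2) ^ ks (2*t+1+2) * gg n 1 ^ (s * eps (ks (2*t+1+1+2)))) *
              gg n (2*t+1+1+2) ^ ks (2*t+1+1+2) := by group
        _ = B * (gg n 1 ^ (s * eps (ks (2*t+1+1+2))) * gg n (2*t+1+2) ^ ks (2*t+1+2)) *
              gg n (2*t+1+1+2) ^ ks (2*t+1+1+2) := by rw [hodd]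
        _ = (B * gg n 1 ^ (s * eps (ks (2*t+1+1+2)))) * (gg n (2*t+1+2) ^ ks (2*t+1+2) *
              gg n (2*t+1+1+2) ^ ks (2*t+1+1+2)) := by group
        _ = gg n 1 ^ (s * eps (ks (2*t+1+1+2)) * eps (∑ i ∈ Finset.range (t+1), ks (2*i+2))) *
              B * (gg n (2*t+1+2) ^ ks (2*t+1+2) *
              gg n (2*t+1+1+2) ^ ks (2*t+1+1+2)) := by rw [ih hb]
        _ = gg n 1 ^ (s * eps (∑ i ∈ Finset.range (t+1+1), ks (2*i+2))) *
              (B * gg n (2*t+1+2) ^ ks (2*t+1+2) * gg n (2*t+1+1+2) ^ ks (2*t+1+1+2)) := by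
            have hsum : ∑ i ∈ Finset.range (t+1+1), ks (2*i+2)
                = (∑ i ∈ Finset.range (t+1), ks (2*i+2)) + ks (2*t+1+1+2) := by
              rw [Finset.sum_range_succ]
              ring_nf
            rw [hsum, eps_add,
              show s * (eps (∑ i ∈ Finset.range (t+1), ks (2*i+2)) * eps (ks (2*t+1+1+2)))
                = s * eps (ks (2*t+1+1+2)) * eps (∑ i ∈ Finset.range (t+1), ks (2*i+2))
                from by ring]
            group

lemma conj_fix {G : Type*} [Group G] {g x : G} (h : Commute g x) (k : ℤ) :
    g ^ k * x * (g ^ k)⁻¹ = x := by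
  rw [(h.zpow_left k).eq, mul_inv_cancel_right]

lemma comm_gj_B {n t : ℕ} (ht : 2*t+2 ≤ 2*n+1) (ks : ℕ → ℤ) :
    Commute (gg n (2*t+2))
      (((List.range (2*t+1)).map (fun i => gg n (i+2) ^ ks (i+2))).prod) := by
  apply Commute.list_prod_right
  intro x hx
  obtain ⟨i, hi, rfl⟩ := List.mem_map.mp hx
  have hi' := List.mem_range.mp hi
  exact (gcomm (2*t+2) (i+2) (by omega) (by omega) (by omega) (by omega) (by omega)).zpow_right _

lemma comm_gj_C {n t u : ℕ} (ht : 2*t+2 ≤ 2*n+1) (hu : 2*t+1+(1+u) ≤ 2*n) (ks : ℕ → ℤ) :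
    Commute (gg n (2*t+2))
      (((List.range u).map (fun i => gg n (2*t+1+(1+i)+2) ^ ks (2*t+1+(1+i)+2))).prod) := by
  apply Commute.list_prod_right
  intro x hx
  obtain ⟨i, hi, rfl⟩ := List.mem_map.mp hx
  have hi' := List.mem_range.mp hi
  exact (gcomm (2*t+2) (2*t+1+(1+i)+2) (by omega) (by omega) (by omega) (by omega)
    (by omega)).zpow_right _

end Aux

open Aux in
theorem stmt11 (n : ℕ) (j : ℕ) (hje : j % 2 = 0) (hj1 : 2 ≤ j) (hj2 : j ≤ 2*n)
    (kk : ℤ) (ks : ℕ → ℤ) :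
    gg n j ^ kk * ((List.range (2*n+1)).map (fun i => gg n (i+1) ^ ks (i+1))).prod *
      (gg n j ^ kk)⁻¹ =
    gg n 1 ^ (ks 1 * eps kk +
        ks (j+1) * (kk % 2) * eps ((∑ i ∈ Finset.range (j/2), ks (2*i+2)) + kk)) *
      ((List.range (2*n)).map (fun i => gg n (i+2) ^ ks (i+2))).prod := by
  obtain ⟨t, rfl⟩ : ∃ t, j = 2*t+2 := ⟨j/2-1, by omega⟩
  have hd : (2*t+2)/2 = t+1 := by omega
  rw [hd]
  obtain ⟨u, h2n⟩ : ∃ u, 2*n = 2*t+1+(1+u) := ⟨2*n-(2*t+2), by omega⟩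
  have hsplitL : ((List.range (2*n+1)).map (fun i => gg n (i+1) ^ ks (i+1))).prod
      = gg n 1 ^ ks 1 * ((List.range (2*n)).map (fun i => gg n (i+2) ^ ks (i+2))).prod := by
    rw [show List.range (2*n+1) = List.range (1+2*n) from by rw [Nat.add_comm], List.range_add]
    simp only [List.map_append, List.prod_append, List.map_map]
    congr 1
    · simp [List.range_succ]
    · congr 1
      apply List.map_congr_left
      intro i _
      simp only [Function.comp_apply]
      rw [show 1+i+1 = i+2 from by omega]
  have hsplitR : ((List.range (2*n)).map (fun i => gg n (i+2) ^ ks (i+2))).prod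
      = ((List.range (2*t+1)).map (fun i => gg n (i+2) ^ ks (i+2))).prod *
        (gg n (2*t+2+1) ^ ks (2*t+2+1) *
         ((List.range u).map
            (fun i => gg n (2*t+1+(1+i)+2) ^ ks (2*t+1+(1+i)+2))).prod) := by
    rw [show List.range (2*n) = List.range (2*t+1+(1+u)) from by rw [h2n], List.range_add, List.range_add]
    simp only [List.map_append, List.prod_append, List.map_map]
    congr 1
    rw [List.range_add]
    simp only [List.map_append, List.prod_append, List.map_map]
    congr 1
    simp only [List.range_succ, List.range_zero, List.map_nil, List.map_cons, List.nil_append,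
      List.prod_cons, List.prod_nil, mul_one, Function.comp_apply, Nat.add_zero]
    try rw [show 2*t+1+2 = 2*t+2+1 from by omega]
  rw [hsplitL, hsplitR]
  have hBc : Commute (gg n (2*t+2))
      (((List.range (2*t+1)).map (fun i => gg n (i+2) ^ ks (i+2))).prod) :=
    comm_gj_B (by omega) ks
  have hCc : Commute (gg n (2*t+2))
      (((List.range u).map
        (fun i => gg n (2*t+1+(1+i)+2) ^ ks (2*t+1+(1+i)+2))).prod) :=
    comm_gj_C (by omega) (by omega) ks
  rw [show ∀ X Y Z W : Gn n, gg n (2*t+2) ^ kk * (X * (Y * (Z * W))) * (gg n (2*t+2) ^ kk)⁻¹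
      = (gg n (2*t+2) ^ kk * X * (gg n (2*t+2) ^ kk)⁻¹) *
        ((gg n (2*t+2) ^ kk * Y * (gg n (2*t+2) ^ kk)⁻¹) *
         ((gg n (2*t+2) ^ kk * Z * (gg n (2*t+2) ^ kk)⁻¹) *
          (gg n (2*t+2) ^ kk * W * (gg n (2*t+2) ^ kk)⁻¹))) from fun X Y Z W => by group,
    conj_pow_a (2*t+2) (by omega) (by omega) (by omega) kk (ks 1),
    conj_fix hBc kk, conj_fix hCc kk,
    conj_pow_b' (2*t+2) (by omega) (by omega) (by omega) kk (ks (2*t+2+1))]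
  rw [show ∀ X Y : Gn n, X *
        ((gg n 1 ^ (-(kk % 2) * ks (2*t+2+1)) * gg n (2*t+2+1) ^ ks (2*t+2+1)) * Y)
      = (X * gg n 1 ^ (-(kk % 2) * ks (2*t+2+1))) *
        (gg n (2*t+2+1) ^ ks (2*t+2+1) * Y) from fun X Y => by group,
    moveB ks t (by omega) (-(kk % 2) * ks (2*t+2+1))]
  have hexp : ks 1 * eps kk +
      ks (2*t+2+1) * (kk % 2) * eps ((∑ i ∈ Finset.range (t+1), ks (2*i+2)) + kk)
      = ks 1 * eps kk +
        -(kk % 2) * ks (2*t+2+1) * eps (∑ i ∈ Finset.range (t+1), ks (2*i+2)) := by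
    rcases (show kk % 2 = 0 ∨ kk % 2 = 1 from by omega) with h | h
    · rw [h]; ring
    · rw [h, eps_add, show eps kk = -1 from by simp [eps, h]]
      ring
  rw [hexp]
  group
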